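/- arXiv:1901.07138 — 2 statements merged into one kernel-verified Lean document; each statement's English description precedes it below -/
import Mathlib

section
/- Let Δ be a nonnegative random variable with P(Δ > 0) > 0 and Laplace–Stieltjes transform L(ϑ) = E[exp(−ϑΔ)]; let n be a random variable with values in {1,2,3,...} and probability generating function g(z) = E[z^n] (so g(0) = 0); let w be a nonnegative random variable with P(w > 0) > 0 and Laplace–Stieltjes transform l(v) = E[exp(−vw)]; let λ > 0. Suppose complex numbers θ, z, v satisfy Re θ ≥ 0, |z| ≤ 1, Re v ≥ 0, and at least one of the three strict inequalities Re θ > 0, |z| < 1, Re v > 0 holds (equivalently: all three strict, with any two weakened to non-strict). Then |L(θ + λ − λ·g(z·l(v)))| < 1. -/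
open MeasureTheory

noncomputable section

lemma lst_integrable {Ω : Type*} [MeasurableSpace Ω] (P : Measure Ω) [IsProbabilityMeasure P]
    (X : Ω → ℝ) (hXm : Measurable X) (hX0 : ∀ ω, 0 ≤ X ω) (v : ℂ) (hv : 0 ≤ v.re) :
    Integrable (fun ω => Complex.exp (-v * X ω)) P := by
  refine (integrable_const (1:ℝ)).mono' ?_ (Filter.Eventually.of_forall fun ω => ?_)
  · exact (Complex.measurable_exp.comp ((measurable_const.mul (Complex.measurable_ofReal.comp hXm)))).aestronglyMeasurable
  · rw [Complex.norm_exp]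
    apply Real.exp_le_one_iff.mpr
    simp only [Complex.neg_re, Complex.mul_re, Complex.ofReal_re, Complex.ofReal_im, mul_zero, sub_zero]
    nlinarith [hX0 ω, mul_nonneg hv (hX0 ω)]

lemma lst_norm_le_one {Ω : Type*} [MeasurableSpace Ω] (P : Measure Ω) [IsProbabilityMeasure P]
    (X : Ω → ℝ) (hXm : Measurable X) (hX0 : ∀ ω, 0 ≤ X ω) (v : ℂ) (hv : 0 ≤ v.re) :
    ‖∫ ω, Complex.exp (-v * X ω) ∂P‖ ≤ 1 := by
  calc ‖∫ ω, Complex.exp (-v * X ω) ∂P‖ ≤ ∫ ω, ‖Complex.exp (-v * X ω)‖ ∂P :=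
        norm_integral_le_integral_norm _
    _ ≤ ∫ (_ : Ω), (1:ℝ) ∂P := by
        apply integral_mono ((lst_integrable P X hXm hX0 v hv).norm) (integrable_const 1)
        intro ω
        dsimp only
        rw [Complex.norm_exp]
        apply Real.exp_le_one_iff.mpr
        simp only [Complex.neg_re, Complex.mul_re, Complex.ofReal_re, Complex.ofReal_im, mul_zero, sub_zero]
        nlinarith [hX0 ω, mul_nonneg hv (hX0 ω)]
    _ = 1 := by simp

lemma lst_norm_lt_one {Ω : Type*} [MeasurableSpace Ω] (P : Measure Ω) [IsProbabilityMeasure P]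
    (X : Ω → ℝ) (hXm : Measurable X) (hX0 : ∀ ω, 0 ≤ X ω) (hXpos : 0 < P {ω | 0 < X ω})
    (v : ℂ) (hv : 0 < v.re) :
    ‖∫ ω, Complex.exp (-v * X ω) ∂P‖ < 1 := by
  have hre : ∀ ω, ‖Complex.exp (-v * X ω)‖ = Real.exp (-(v.re * X ω)) := by
    intro ω
    rw [Complex.norm_exp]
    congr 1
    simp [Complex.mul_re]
  have hint : Integrable (fun ω => Real.exp (-(v.re * X ω))) P := by
    have := (lst_integrable P X hXm hX0 v hv.le).norm
    simpa only [hre] using this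
  have key : ∫ ω, Real.exp (-(v.re * X ω)) ∂P < 1 := by
    have h1 : (0:ℝ) < ∫ ω, (1 - Real.exp (-(v.re * X ω))) ∂P := by
      rw [integral_pos_iff_support_of_nonneg]
      · have : Function.support (fun ω => 1 - Real.exp (-(v.re * X ω))) = {ω | 0 < X ω} := by
          ext ω
          simp only [Function.mem_support, Set.mem_setOf_eq, sub_ne_zero]
          constructor
          · intro h
            rcases lt_or_eq_of_le (hX0 ω) with h' | h'
            · exact h'
            · exfalso; apply h; rw [← h', mul_zero, neg_zero, Real.exp_zero]
          · intro h hc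
            have h0 : -(v.re * X ω) = 0 := by
              have : Real.exp (-(v.re * X ω)) = Real.exp 0 := by rw [Real.exp_zero]; exact hc.symm
              exact Real.exp_injective this
            nlinarith
        rw [this]; exact hXpos
      · intro ω
        have : Real.exp (-(v.re * X ω)) ≤ 1 := Real.exp_le_one_iff.mpr (by nlinarith [hX0 ω])
        simp only [Pi.zero_apply]; linarith
      · exact (integrable_const 1).sub hint
    have h2 : ∫ ω, (1 - Real.exp (-(v.re * X ω))) ∂P = 1 - ∫ ω, Real.exp (-(v.re * X ω)) ∂P := by
      rw [integral_sub (integrable_const 1) hint]; simp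
    linarith [h2 ▸ h1]
  calc ‖∫ ω, Complex.exp (-v * X ω) ∂P‖ ≤ ∫ ω, ‖Complex.exp (-v * X ω)‖ ∂P :=
        norm_integral_le_integral_norm _
    _ = ∫ ω, Real.exp (-(v.re * X ω)) ∂P := by simp only [hre]
    _ < 1 := key

lemma pgf_norm_le {Ω : Type*} [MeasurableSpace Ω] (P : Measure Ω) [IsProbabilityMeasure P]
    (n : Ω → ℕ) (hnm : Measurable n) (hn1 : ∀ ω, 1 ≤ n ω) (u : ℂ) (hu : ‖u‖ ≤ 1) :
    ‖∫ ω, u ^ n ω ∂P‖ ≤ ‖u‖ := by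
  have hint : Integrable (fun ω => u ^ n ω) P := by
    refine (integrable_const (1:ℝ)).mono' ?_ (Filter.Eventually.of_forall fun ω => ?_)
    · exact (measurable_const.pow hnm).aestronglyMeasurable
    · rw [norm_pow]
      exact pow_le_one₀ (norm_nonneg u) hu
  calc ‖∫ ω, u ^ n ω ∂P‖ ≤ ∫ ω, ‖u ^ n ω‖ ∂P := norm_integral_le_integral_norm _
    _ ≤ ∫ (_ : Ω), ‖u‖ ∂P := by
        apply integral_mono hint.norm (integrable_const _)
        intro ω
        dsimp only
        rw [norm_pow]
        calc ‖u‖ ^ n ω ≤ ‖u‖ ^ 1 := pow_le_pow_of_le_one (norm_nonneg u) hu (hn1 ω)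
          _ = ‖u‖ := pow_one _
    _ = ‖u‖ := by simp

/-- Theorem 2.2 of the paper: the norm bound
`‖L(θ + λ − λ g(z l(v)))‖ < 1` for the joint transform of the observed increments. -/
theorem norm_gamma_lt_one
    {Ω : Type*} [MeasurableSpace Ω] (P : Measure Ω) [IsProbabilityMeasure P]
    (Δ : Ω → ℝ) (n : Ω → ℕ) (w : Ω → ℝ)
    (hΔm : Measurable Δ) (hnm : Measurable n) (hwm : Measurable w)
    (hΔ0 : ∀ ω, 0 ≤ Δ ω) (hΔpos : 0 < P {ω | 0 < Δ ω})
    (hn1 : ∀ ω, 1 ≤ n ω)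
    (hw0 : ∀ ω, 0 ≤ w ω) (hwpos : 0 < P {ω | 0 < w ω})
    (lam : ℝ) (hlam : 0 < lam)
    -- the Laplace–Stieltjes transform of `Δ`
    (L : ℂ → ℂ) (hL : ∀ ϑ : ℂ, 0 ≤ ϑ.re → L ϑ = ∫ ω, Complex.exp (-ϑ * Δ ω) ∂P)
    -- the probability generating function of `n`
    (g : ℂ → ℂ) (hg : ∀ z : ℂ, ‖z‖ ≤ 1 → g z = ∫ ω, z ^ n ω ∂P)
    -- the Laplace–Stieltjes transform of `w`
    (l : ℂ → ℂ) (hl : ∀ v : ℂ, 0 ≤ v.re → l v = ∫ ω, Complex.exp (-v * w ω) ∂P)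
    (θ z v : ℂ)
    (hθ : 0 ≤ θ.re) (hz : ‖z‖ ≤ 1) (hv : 0 ≤ v.re)
    (hstrict : 0 < θ.re ∨ ‖z‖ < 1 ∨ 0 < v.re) :
    ‖L (θ + lam - lam * g (z * l v))‖ < 1 := by
  set u := z * l v with hu_def
  have hlv : ‖l v‖ ≤ 1 := by rw [hl v hv]; exact lst_norm_le_one P w hwm hw0 v hv
  have hu : ‖u‖ ≤ 1 := by
    rw [hu_def, norm_mul]
    exact mul_le_one₀ hz (norm_nonneg _) hlv
  have hgu : ‖g u‖ ≤ ‖u‖ := by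
    rw [hg u hu]; exact pgf_norm_le P n hnm hn1 u hu
  have hre_eq : (θ + (lam:ℂ) - (lam:ℂ) * g u).re = θ.re + lam - lam * (g u).re := by
    simp [Complex.add_re, Complex.sub_re, Complex.mul_re]
  have hre_le : (g u).re ≤ ‖g u‖ := Complex.re_le_norm _
  have hre : 0 < (θ + (lam:ℂ) - (lam:ℂ) * g u).re := by
    rw [hre_eq]
    rcases hstrict with h | h
    · nlinarith [hgu.trans hu, hre_le]
    · have hulst : ‖u‖ < 1 := by
        rcases h with h | h
        · rw [hu_def, norm_mul]
          calc ‖z‖ * ‖l v‖ ≤ ‖z‖ * 1 := by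
                apply mul_le_mul_of_nonneg_left hlv (norm_nonneg _)
            _ < 1 := by rwa [mul_one]
        · have : ‖l v‖ < 1 := by
            rw [hl v hv]; exact lst_norm_lt_one P w hwm hw0 hwpos v h
          rw [hu_def, norm_mul]
          calc ‖z‖ * ‖l v‖ ≤ 1 * ‖l v‖ := by
                apply mul_le_mul_of_nonneg_right hz (norm_nonneg _)
            _ < 1 := by rwa [one_mul]
      nlinarith [hgu.trans_lt hulst, hre_le]
  rw [hL _ hre.le]
  exact lst_norm_lt_one P Δ hΔm hΔ0 hΔpos _ hre
end
end

section
/- Let (N_n)_{n≥0} be a nondecreasing sequence of natural numbers and (W_n)_{n≥0} a nondecreasing sequence of nonnegative reals, with the convention N_{−1} = 0 and W_{−1} = 0. For p, q ∈ ℕ and s ∈ [0,∞) define μ_1(p) = inf{n ≥ 0 : N_n > p}, μ(q) = inf{n ≥ 0 : N_n > q}, and ν(s) = inf{n ≥ 0 : W_n > s}. Then for all integers 0 ≤ j < k < n, all complex x, y with |x| < 1 and |y| < 1, and all complex w with Re w > 0: (1−x)(1−y)·w · Σ_{p=0}^{∞} Σ_{q=0}^{∞} x^p y^q ∫_{0}^{∞}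 e^{−ws} · 1{p < q} · 1{μ_1(p) = j} · 1{μ(q) = k} · 1{ν(s) = n} ds = (x^{N_{j−1}} − x^{N_j}) · (y^{N_{k−1}} − y^{N_k}) · (e^{−w·W_{n−1}} − e^{−w·W_n}). In particular the result is insensitive to the constraint p < q: omitting the factor 1{p < q} yields the same value. -/
open MeasureTheory

noncomputable section

/-- The first index `n` at which `pred n` holds, as an extended natural (`⊤` if none). -/
def firstIdx (pred : ℕ → Prop) : ℕ∞ := sInf {m : ℕ∞ | ∃ n : ℕ, m = n ∧ pred n}

lemma firstIdx_eq_coe_iff (pred : ℕ → Prop) (j : ℕ) :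
    firstIdx pred = (j : ℕ∞) ↔ pred j ∧ ∀ m < j, ¬ pred m := by
  constructor
  · intro h
    have hub : ∀ m < j, ¬ pred m := by
      intro m hm hp
      have h1 : firstIdx pred ≤ (m : ℕ∞) := sInf_le ⟨m, rfl, hp⟩
      rw [h] at h1
      exact absurd (Nat.cast_le.mp h1) (not_le.mpr hm)
    refine ⟨?_, hub⟩
    by_contra hj
    have h2 : ((j : ℕ∞) + 1) ≤ firstIdx pred := by
      apply le_sInf
      rintro m ⟨nn, rfl, hp⟩
      have hlt : j < nn := by
        rcases lt_trichotomy nn j with h' | h' | h'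
        · exact absurd hp (hub nn h')
        · exact absurd (h' ▸ hp) hj
        · exact h'
      have : (j + 1 : ℕ) ≤ nn := hlt
      exact_mod_cast this
    rw [h] at h2
    have : (j : ℕ∞) < (j : ℕ∞) + 1 := by
      exact_mod_cast Nat.lt_succ_self j
    exact absurd h2 (not_le.mpr this)
  · rintro ⟨h1, h2⟩
    apply le_antisymm
    · exact sInf_le ⟨j, rfl, h1⟩
    · apply le_sInf
      rintro m ⟨nn, rfl, hp⟩
      have : j ≤ nn := le_of_not_gt (fun h' => h2 nn h' hp)
      exact_mod_cast this

lemma firstIdx_nat_set (N : ℕ → ℕ) (hN : Monotone N) (j : ℕ) :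
    {p : ℕ | firstIdx (fun m => p < N m) = (j : ℕ∞)} =
      Set.Ico (if j = 0 then 0 else N (j - 1)) (N j) := by
  ext p
  simp only [Set.mem_setOf_eq, firstIdx_eq_coe_iff, Set.mem_Ico, not_lt]
  constructor
  · rintro ⟨h1, h2⟩
    refine ⟨?_, h1⟩
    split_ifs with hj
    · exact Nat.zero_le _
    · exact h2 (j - 1) (Nat.sub_lt (Nat.pos_of_ne_zero hj) one_pos)
  · rintro ⟨h1, h2⟩
    refine ⟨h2, fun m hm => ?_⟩
    have hj : j ≠ 0 := by omega
    rw [if_neg hj] at h1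
    exact le_trans (hN (by omega : m ≤ j - 1)) h1

lemma firstIdx_real_set (W : ℕ → ℝ) (hW : Monotone W) (n : ℕ) (hn : n ≠ 0) :
    {s : ℝ | firstIdx (fun m => s < W m) = (n : ℕ∞)} = Set.Ico (W (n - 1)) (W n) := by
  ext s
  simp only [Set.mem_setOf_eq, firstIdx_eq_coe_iff, Set.mem_Ico, not_lt]
  constructor
  · rintro ⟨h1, h2⟩
    exact ⟨h2 (n - 1) (Nat.sub_lt (Nat.pos_of_ne_zero hn) one_pos), h1⟩
  · rintro ⟨h1, h2⟩
    exact ⟨h2, fun m hm => le_trans (hW (by omega : m ≤ n - 1)) h1⟩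

lemma geom_indicator_sum (x : ℂ) (hx1 : x ≠ 1) (a b : ℕ) (hab : a ≤ b) :
    (1 - x) * ∑' p : ℕ, x ^ p * (Set.Ico a b).indicator (fun _ => (1 : ℂ)) p
      = x ^ a - x ^ b := by
  have hts : ∑' p : ℕ, x ^ p * (Set.Ico a b).indicator (fun _ => (1 : ℂ)) p
      = ∑ p ∈ Finset.Ico a b, x ^ p := by
    rw [tsum_eq_sum (s := Finset.Ico a b)]
    · apply Finset.sum_congr rfl
      intro p hp
      have : p ∈ Set.Ico a b := by simpa using hp
      simp [Set.indicator_of_mem this]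
    · intro p hp
      have : p ∉ Set.Ico a b := by simpa using hp
      simp [Set.indicator_of_notMem this]
  rw [hts, geom_sum_Ico hx1 hab]
  have : x - 1 ≠ 0 := sub_ne_zero.mpr hx1
  field_simp
  ring

lemma exp_integral_piece (w : ℂ) (hw : w ≠ 0) (b c : ℝ) (hb0 : 0 ≤ b) (hbc : b ≤ c) :
    w * ∫ s in Set.Ioi (0 : ℝ), Complex.exp (-w * s) *
        (Set.Ico b c).indicator (fun _ => (1 : ℂ)) s
      = Complex.exp (-w * b) - Complex.exp (-w * c) := by
  have h1 : ∀ s : ℝ, Complex.exp (-w * s) * (Set.Ico b c).indicator (fun _ => (1 : ℂ)) s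
      = (Set.Ico b c).indicator (fun s : ℝ => Complex.exp (-w * s)) s := by
    intro s
    by_cases h : s ∈ Set.Ico b c <;>
      simp [Set.indicator_of_mem, Set.indicator_of_notMem, h]
  simp only [h1]
  rw [setIntegral_indicator measurableSet_Ico]
  have hae : (Set.Ioi (0:ℝ) ∩ Set.Ico b c : Set ℝ) =ᵐ[volume] Set.Ioc b c := by
    rcases eq_or_lt_of_le hb0 with hb | hb
    · have : (Set.Ioi (0:ℝ) ∩ Set.Ico b c : Set ℝ) = Set.Ioo b c := by
        ext s
        simp only [Set.mem_inter_iff, Set.mem_Ioi, Set.mem_Ico, Set.mem_Ioo, ← hb]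
        constructor
        · rintro ⟨h1, h2, h3⟩; exact ⟨h1, h3⟩
        · rintro ⟨h1, h2⟩; exact ⟨h1, le_of_lt h1, h2⟩
      rw [this]
      exact Ioo_ae_eq_Ioc
    · have : (Set.Ioi (0:ℝ) ∩ Set.Ico b c : Set ℝ) = Set.Ico b c := by
        ext s
        simp only [Set.mem_inter_iff, Set.mem_Ioi, Set.mem_Ico]
        constructor
        · rintro ⟨h1, h2⟩; exact h2
        · rintro ⟨h1, h2⟩; exact ⟨lt_of_lt_of_le hb h1, h1, h2⟩
      rw [this]
      exact Ico_ae_eq_Ioc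
  rw [setIntegral_congr_set hae, ← intervalIntegral.integral_of_le hbc,
    integral_exp_mul_complex (neg_ne_zero.mpr hw)]
  rw [div_neg, mul_neg, mul_div_cancel₀ _ hw, neg_sub]

lemma core_identity
    (N : ℕ → ℕ) (W : ℕ → ℝ) (hN : Monotone N) (hW : Monotone W) (hW0 : ∀ m, 0 ≤ W m)
    (j k n : ℕ) (hjk : j < k) (hkn : k < n)
    (x y w : ℂ) (hx : ‖x‖ < 1) (hy : ‖y‖ < 1) (hw : 0 < w.re) :
    ((1 - x) * (1 - y) * w * ∑' p : ℕ, ∑' q : ℕ, x ^ p * y ^ q *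
        ∫ s in Set.Ioi (0 : ℝ), Complex.exp (-w * s) *
          (Set.indicator {p : ℕ | firstIdx (fun m => p < N m) = (j : ℕ∞)} (fun _ => (1 : ℂ)) p *
            Set.indicator {q : ℕ | firstIdx (fun m => q < N m) = (k : ℕ∞)} (fun _ => (1 : ℂ)) q *
            Set.indicator {s : ℝ | firstIdx (fun m => s < W m) = (n : ℕ∞)} (fun _ => (1 : ℂ)) s)
      = (x ^ (if j = 0 then 0 else N (j - 1)) - x ^ N j) *
          (y ^ (if k = 0 then 0 else N (k - 1)) - y ^ N k) *
          (Complex.exp (-w * (if n = 0 then (0 : ℝ) else W (n - 1)))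
            - Complex.exp (-w * W n))) := by
  have hx1 : x ≠ 1 := by intro h; rw [h] at hx; simp at hx
  have hy1 : y ≠ 1 := by intro h; rw [h] at hy; simp at hy
  have hw0 : w ≠ 0 := by intro h; rw [h] at hw; simp at hw
  have hk : k ≠ 0 := by omega
  have hn : n ≠ 0 := by omega
  have hA := firstIdx_nat_set N hN j
  have hB := firstIdx_nat_set N hN k
  have hC := firstIdx_real_set W hW n hn
  rw [if_neg hk] at hB
  simp only [hA, hB, hC, if_neg hk, if_neg hn]
  have hterm : ∀ p q : ℕ,
      x ^ p * y ^ q * ∫ s in Set.Ioi (0 : ℝ), Complex.exp (-w * s) *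
          ((Set.Ico (if j = 0 then 0 else N (j - 1)) (N j)).indicator (fun _ => (1 : ℂ)) p *
            (Set.Ico (N (k - 1)) (N k)).indicator (fun _ => (1 : ℂ)) q *
            (Set.Ico (W (n - 1)) (W n)).indicator (fun _ => (1 : ℂ)) s)
      = (x ^ p * (Set.Ico (if j = 0 then 0 else N (j - 1)) (N j)).indicator (fun _ => (1 : ℂ)) p)
        * ((y ^ q * (Set.Ico (N (k - 1)) (N k)).indicator (fun _ => (1 : ℂ)) q)
          * (w * ∫ s in Set.Ioi (0 : ℝ), Complex.exp (-w * s) *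
              (Set.Ico (W (n - 1)) (W n)).indicator (fun _ => (1 : ℂ)) s))
        * w⁻¹ := by
    intro p q
    have h2 : (fun s : ℝ => Complex.exp (-w * s) *
          ((Set.Ico (if j = 0 then 0 else N (j - 1)) (N j)).indicator (fun _ => (1 : ℂ)) p *
            (Set.Ico (N (k - 1)) (N k)).indicator (fun _ => (1 : ℂ)) q *
            (Set.Ico (W (n - 1)) (W n)).indicator (fun _ => (1 : ℂ)) s))
        = fun s : ℝ =>
          ((Set.Ico (if j = 0 then 0 else N (j - 1)) (N j)).indicator (fun _ => (1 : ℂ)) p *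
            (Set.Ico (N (k - 1)) (N k)).indicator (fun _ => (1 : ℂ)) q) *
          (Complex.exp (-w * s) *
            (Set.Ico (W (n - 1)) (W n)).indicator (fun _ => (1 : ℂ)) s) := by
      funext s; ring
    rw [h2, integral_const_mul]
    field_simp
  simp only [hterm]
  simp only [tsum_mul_right, tsum_mul_left]
  have haj : (if j = 0 then 0 else N (j - 1)) ≤ N j := by
    split_ifs with h
    · exact Nat.zero_le _
    · exact hN (Nat.sub_le j 1)
  rw [← geom_indicator_sum x hx1 _ (N j) haj,
    ← geom_indicator_sum y hy1 (N (k - 1)) (N k) (hN (Nat.sub_le k 1)),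
    ← exp_integral_piece w hw0 (W (n - 1)) (W n) (hW0 _) (hW (Nat.sub_le n 1))]
  field_simp

/-- Lemma 3.1 of the paper, `M₁`-level insensitivity: the action of the
three-fold operator `D_{pqs}` on the indicator `1{p<q} 1{μ₁(p)=j} 1{μ(q)=k} 1{ν(s)=n}`
for `j < k < n`, and the insensitivity to the constraint `p < q`. -/
theorem D_operator_insensitivity
    (N : ℕ → ℕ) (W : ℕ → ℝ) (hN : Monotone N) (hW : Monotone W) (hW0 : ∀ m, 0 ≤ W m)
    (j k n : ℕ) (hjk : j < k) (hkn : k < n)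
    (x y w : ℂ) (hx : ‖x‖ < 1) (hy : ‖y‖ < 1) (hw : 0 < w.re) :
    ((1 - x) * (1 - y) * w * ∑' p : ℕ, ∑' q : ℕ, x ^ p * y ^ q *
        ∫ s in Set.Ioi (0 : ℝ), Complex.exp (-w * s) *
          (Set.indicator {pq : ℕ × ℕ | pq.1 < pq.2} (fun _ => (1 : ℂ)) (p, q) *
            Set.indicator {p : ℕ | firstIdx (fun m => p < N m) = (j : ℕ∞)} (fun _ => (1 : ℂ)) p *
            Set.indicator {q : ℕ | firstIdx (fun m => q < N m) = (k : ℕ∞)} (fun _ => (1 : ℂ)) q *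
            Set.indicator {s : ℝ | firstIdx (fun m => s < W m) = (n : ℕ∞)} (fun _ => (1 : ℂ)) s)
      = (x ^ (if j = 0 then 0 else N (j - 1)) - x ^ N j) *
          (y ^ (if k = 0 then 0 else N (k - 1)) - y ^ N k) *
          (Complex.exp (-w * (if n = 0 then (0 : ℝ) else W (n - 1)))
            - Complex.exp (-w * W n)))
    ∧
    ((1 - x) * (1 - y) * w * ∑' p : ℕ, ∑' q : ℕ, x ^ p * y ^ q *
        ∫ s in Set.Ioi (0 : ℝ), Complex.exp (-w * s) *
          (Set.indicator {p : ℕ | firstIdx (fun m => p < N m) = (j : ℕ∞)} (fun _ => (1 : ℂ)) p *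
            Set.indicator {q : ℕ | firstIdx (fun m => q < N m) = (k : ℕ∞)} (fun _ => (1 : ℂ)) q *
            Set.indicator {s : ℝ | firstIdx (fun m => s < W m) = (n : ℕ∞)} (fun _ => (1 : ℂ)) s)
      = (x ^ (if j = 0 then 0 else N (j - 1)) - x ^ N j) *
          (y ^ (if k = 0 then 0 else N (k - 1)) - y ^ N k) *
          (Complex.exp (-w * (if n = 0 then (0 : ℝ) else W (n - 1)))
            - Complex.exp (-w * W n))) := by
  have hk : k ≠ 0 := by omega
  have hA := firstIdx_nat_set N hN j
  have hB := firstIdx_nat_set N hN k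
  rw [if_neg hk] at hB
  have hdrop : ∀ p q : ℕ,
      Set.indicator {pq : ℕ × ℕ | pq.1 < pq.2} (fun _ => (1 : ℂ)) (p, q) *
        Set.indicator {p : ℕ | firstIdx (fun m => p < N m) = (j : ℕ∞)} (fun _ => (1 : ℂ)) p *
        Set.indicator {q : ℕ | firstIdx (fun m => q < N m) = (k : ℕ∞)} (fun _ => (1 : ℂ)) q
      = Set.indicator {p : ℕ | firstIdx (fun m => p < N m) = (j : ℕ∞)} (fun _ => (1 : ℂ)) p *
        Set.indicator {q : ℕ | firstIdx (fun m => q < N m) = (k : ℕ∞)} (fun _ => (1 : ℂ)) q := by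
    intro p q
    rw [hA, hB]
    by_cases hp : p ∈ Set.Ico (if j = 0 then 0 else N (j - 1)) (N j)
    · by_cases hq : q ∈ Set.Ico (N (k - 1)) (N k)
      · have hpq : p < q :=
          lt_of_lt_of_le hp.2 (le_trans (hN (by omega : j ≤ k - 1)) hq.1)
        rw [Set.indicator_of_mem hp, Set.indicator_of_mem hq,
          Set.indicator_of_mem (show (p, q) ∈ {pq : ℕ × ℕ | pq.1 < pq.2} from hpq)]
        ring
      · rw [Set.indicator_of_notMem hq]; ring
    · rw [Set.indicator_of_notMem hp]; ring
  constructor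
  · simp only [hdrop]
    exact core_identity N W hN hW hW0 j k n hjk hkn x y w hx hy hw
  · exact core_identity N W hN hW hW0 j k n hjk hkn x y w hx hy hw
end
end
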